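/- Let β : ℝ → ℝ be continuous and nondecreasing with β(0) = 0, let β̂(r) := ∫_0^r β(s) ds, and suppose there is a constant c_β > 0 with |β(r)| ≤ c_β (1 + β̂(r)) for all r ∈ ℝ. Then there exists a constant c > 0 such that β̂(r) + β̂(-r) ≤ c + e^{c r} for every r ≥ 0. -/

import Mathlib

open Real intervalIntegral

/-- let `β` be continuous, nondecreasing, `β(0) = 0`, `β̂(r) = ∫_0^r β`,
and `|β(r)| ≤ c_β (1 + β̂(r))` for all `r`, with `c_β > 0`. Then there is `c > 0` with
`β̂(r) + β̂(-r) ≤ c + e^{c r}` for every `r ≥ 0`. -/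
theorem stmt_10 (β : ℝ → ℝ) (hc : Continuous β) (hm : Monotone β) (h0 : β 0 = 0)
    (cβ : ℝ) (hcβ : 0 < cβ)
    (hgrow : ∀ r : ℝ, |β r| ≤ cβ * (1 + ∫ s in (0:ℝ)..r, β s)) :
    ∃ c > 0, ∀ r : ℝ, 0 ≤ r →
      (∫ s in (0:ℝ)..r, β s) + (∫ s in (0:ℝ)..(-r), β s) ≤ c + Real.exp (c * r) := by
  set F : ℝ → ℝ := fun x => (∫ s in (0:ℝ)..x, β s) + (∫ s in (0:ℝ)..(-x), β s) with hF
  have hder : ∀ x : ℝ, HasDerivAt F (β x - β (-x)) x := by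
    intro x
    have h1 : HasDerivAt (fun u : ℝ => ∫ s in (0:ℝ)..u, β s) (β x) x :=
      intervalIntegral.integral_hasDerivAt_right (hc.intervalIntegrable _ _)
        (hc.stronglyMeasurableAtFilter _ _) hc.continuousAt
    have h2 : HasDerivAt (fun u : ℝ => ∫ s in (0:ℝ)..(-u), β s) (β (-x) * (-1)) x := by
      have h3 : HasDerivAt (fun u : ℝ => ∫ s in (0:ℝ)..u, β s) (β (-x)) (-x) :=
        intervalIntegral.integral_hasDerivAt_right (hc.intervalIntegrable _ _)
          (hc.stronglyMeasurableAtFilter _ _) hc.continuousAt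
      exact h3.comp x (hasDerivAt_neg x)
    have := h1.add h2
    show HasDerivAt ((fun u : ℝ => ∫ s in (0:ℝ)..u, β s) + (fun u : ℝ => ∫ s in (0:ℝ)..(-u), β s)) _ x
    simpa [mul_comm, sub_eq_add_neg] using this
  have key : ∀ r : ℝ, 0 ≤ r → F r ≤ 2 * Real.exp (cβ * r) - 2 := by
    intro r hr
    have hgb := le_gronwallBound_of_liminf_deriv_right_le
      (f := F) (f' := fun x => β x - β (-x)) (δ := 0) (K := cβ) (ε := 2 * cβ) (a := 0) (b := r)
      (fun x _ => ((hder x).continuousAt).continuousWithinAt)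
      (fun x hx rr hrr => ((hder x).hasDerivWithinAt (s := Set.Ici x)).liminf_right_slope_le hrr)
      (by simp [hF])
      (fun x _ => by
        have g1 := hgrow x
        have g2 := hgrow (-x)
        have : β x - β (-x) ≤ |β x| + |β (-x)| :=
          sub_le_iff_le_add.2 (by
            have := neg_abs_le (β (-x))
            nlinarith [le_abs_self (β x)])
        calc β x - β (-x) ≤ |β x| + |β (-x)| := this
          _ ≤ cβ * (1 + ∫ s in (0:ℝ)..x, β s) + cβ * (1 + ∫ s in (0:ℝ)..(-x), β s) := by
              linarith
          _ = cβ * F x + 2 * cβ := by simp [hF]; ring)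
      r (by constructor <;> simp [hr])
    rw [gronwallBound_of_K_ne_0 (ne_of_gt hcβ)] at hgb
    have : (2 : ℝ) * cβ / cβ = 2 := by field_simp
    rw [sub_zero] at hgb
    rw [this] at hgb
    simp only at hgb
    linarith
  refine ⟨2 * cβ + 1, by linarith, fun r hr => ?_⟩
  have h1 : F r ≤ 2 * Real.exp (cβ * r) - 2 := key r hr
  have h2 : 2 * Real.exp (cβ * r) ≤ 1 + Real.exp (2 * cβ * r) := by
    have := sq_nonneg (Real.exp (cβ * r) - 1)
    have e2 : Real.exp (2 * cβ * r) = Real.exp (cβ * r) ^ 2 := by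
      rw [← Real.exp_nat_mul]; ring_nf
    nlinarith
  have h3 : Real.exp (2 * cβ * r) ≤ Real.exp ((2 * cβ + 1) * r) :=
    Real.exp_le_exp.2 (by nlinarith)
  have := h1
  simp only [hF] at this
  linarith
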